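/- Let $k \ge 0$, $|w_1|, |w_2| > 0$, and for $l \in \mathbb{Z}^n$ define $p_l = (l + \frac{1}{2}e_2)^2 + 2|w_1| l_1 + 2i|w_2|(l_2 + \frac{1}{2})$. Then $|p_l^2 + 2k^2 p_l| \ge |w_2|^2$ for every $l \in \mathbb{Z}^n$. -/

import Mathlib

open Complex

lemma half_le_abs_int_half (m : ℤ) : (1:ℝ)/2 ≤ |(m:ℝ) + 1/2| := by
  rcases le_or_gt 0 m with h | h
  · have hm : (0:ℝ) ≤ m := by exact_mod_cast h
    rw [_root_.abs_of_nonneg (by linarith)]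
    linarith
  · have hm' : m ≤ -1 := by omega
    have hm : (m:ℝ) ≤ -1 := by have : (m:ℝ) ≤ ((-1:ℤ):ℝ) := Int.cast_le.mpr hm'; norm_num at this; exact this
    rw [abs_of_nonpos (by linarith)]
    linarith

/-- Lower bound for the symbol: `|p_l² + 2k² p_l| ≥ |w₂|²` on the shifted lattice. -/
theorem stmt_7 {n : ℕ} (hn : 2 ≤ n) (k a b : ℝ) (hk : 0 ≤ k) (ha : 0 < a) (hb : 0 < b)
    (l : Fin n → ℤ) :
    ∀ p : ℂ,
      p = ((∑ j, ((l j : ℝ) + if j = (⟨1, by omega⟩ : Fin n) then (1 : ℝ) / 2 else 0) ^ 2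
              + 2 * a * (l (⟨0, by omega⟩ : Fin n) : ℝ) : ℝ) : ℂ)
          + 2 * b * ((l (⟨1, by omega⟩ : Fin n) : ℝ) + 1 / 2) * Complex.I →
      b ^ 2 ≤ ‖p ^ 2 + 2 * (k : ℂ) ^ 2 * p‖ := by
  intro p hp
  set m : ℤ := l (⟨1, by omega⟩ : Fin n)
  have him : p.im = 2 * b * ((m:ℝ) + 1/2) := by
    rw [hp]
    simp only [Complex.add_im, Complex.mul_im, Complex.mul_re, Complex.ofReal_im,
      Complex.ofReal_re, Complex.I_im, Complex.I_re, Complex.im_ofNat, Complex.re_ofNat, Complex.add_re,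
      Complex.intCast_re, Complex.one_re]
    norm_num
  have hkey : b ≤ |p.im| := by
    rw [him, abs_mul]
    have h1 := half_le_abs_int_half m
    have h2 : |2 * b| = 2 * b := abs_of_pos (by linarith)
    nlinarith [abs_nonneg ((m:ℝ) + 1/2)]
  have habs : ∀ q : ℂ, q.im = p.im → b ≤ ‖q‖ := by
    intro q hq
    calc b ≤ |q.im| := hq ▸ hkey
      _ ≤ ‖q‖ := Complex.abs_im_le_norm q
  have h1 : b ≤ ‖p‖ := habs p rfl
  have h2 : b ≤ ‖p + 2 * (k:ℂ)^2‖ := by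
    apply habs
    simp only [Complex.add_im, Complex.mul_im, Complex.mul_re, Complex.ofReal_im,
      Complex.ofReal_re, Complex.im_ofNat, Complex.re_ofNat, Complex.sq_norm]
    simp [pow_two, Complex.mul_im]
  have : p ^ 2 + 2 * (k : ℂ) ^ 2 * p = p * (p + 2 * (k:ℂ)^2) := by ring
  rw [this, norm_mul]
  calc b ^ 2 = b * b := sq b
    _ ≤ _ := mul_le_mul h1 h2 (le_of_lt hb) (norm_nonneg p)
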